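/- Let X and Y be uniformly discrete metric spaces and f : X → Y a quasi-isometry (coarse equivalence). If there exist injections φ : X → Y and ψ : Y → X, each at bounded distance from f and from a coarse inverse g of f respectively, then there exists a bijection h : X → Y at bounded distance from f; consequently h is a bilipschitz equivalence. -/

import Mathlib

open scoped ENNReal

/-- The closed `r`-neighborhood of a set `A`. -/
def nbhd {Z : Type*} [MetricSpace Z] (r : ℝ) (A : Set Z) : Set Z :=
  {z | ∃ a ∈ A, dist z a ≤ r}

/-- The `r`-boundary of `A`: points outside `A` within distance `r` of `A`. -/
def bdry {Z : Type*} [MetricSpace Z] (r : ℝ) (A : Set Z) : Set Z :=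
  nbhd r A \ A

/-- Uniformly discrete metric space. -/
def UniformlyDiscrete (Z : Type*) [MetricSpace Z] : Prop :=
  ∃ r > (0 : ℝ), ∀ x y : Z, dist x y < r → x = y

/-- Bounded geometry: balls of radius `r` have at most `N_r` points. -/
def BoundedGeometry (Z : Type*) [MetricSpace Z] : Prop :=
  ∀ r : ℝ, ∃ N : ℕ, ∀ x : Z, {y : Z | dist y x ≤ r}.Finite ∧
    {y : Z | dist y x ≤ r}.ncard ≤ N

/-- Coarse Lipschitz map. -/
def CoarseLipschitz {X Y : Type*} [MetricSpace X] [MetricSpace Y] (f : X → Y) : Prop :=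
  ∃ K L : ℝ, ∀ x₁ x₂ : X, dist (f x₁) (f x₂) ≤ K * dist x₁ x₂ + L

open Set Function in
/-- Strengthened Schröder–Bernstein: the bijection agrees pointwise with `f` or
is a section of `g`. -/
theorem schroeder_bernstein_strong {α β : Type*} {f : α → β} {g : β → α}
    (hf : Function.Injective f) (hg : Function.Injective g) :
    ∃ h : α → β, Function.Bijective h ∧ ∀ x, h x = f x ∨ g (h x) = x := by
  classical
  cases' isEmpty_or_nonempty β with hβ hβ
  · have : IsEmpty α := Function.isEmpty f
    exact ⟨fun a => isEmptyElim a, ⟨fun a => isEmptyElim a, fun b => isEmptyElim b⟩,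
      fun x => isEmptyElim x⟩
  set F : Set α →o Set α :=
    { toFun := fun s => (g '' (f '' s)ᶜ)ᶜ
      monotone' := fun s t hst =>
        compl_subset_compl.mpr <| image_mono <| compl_subset_compl.mpr <| image_mono hst }
  set s : Set α := F.lfp
  have hs : (g '' (f '' s)ᶜ)ᶜ = s := F.map_lfp
  have hns : g '' (f '' s)ᶜ = sᶜ := compl_injective (by simp [hs])
  set g' := invFun g
  have g'g : LeftInverse g' g := leftInverse_invFun hg
  have hg'ns : g' '' sᶜ = (f '' s)ᶜ := by rw [← hns, g'g.image_image]
  set h : α → β := s.piecewise f g'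
  have hsurj : Surjective h := by rw [← range_eq_univ, range_piecewise, hg'ns, union_compl_self]
  have hinj : Injective h := by
    refine (injective_piecewise_iff _).2 ⟨hf.injOn, ?_, ?_⟩
    · intro x hx y hy hxy
      obtain ⟨x', _, rfl⟩ : x ∈ g '' (f '' s)ᶜ := by rwa [hns]
      obtain ⟨y', _, rfl⟩ : y ∈ g '' (f '' s)ᶜ := by rwa [hns]
      rw [g'g _, g'g _] at hxy
      rw [hxy]
    · intro x hx y hy hxy
      obtain ⟨y', hy', rfl⟩ : y ∈ g '' (f '' s)ᶜ := by rwa [hns]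
      rw [g'g _] at hxy
      exact hy' ⟨x, hx, hxy⟩
  refine ⟨h, ⟨hinj, hsurj⟩, fun x => ?_⟩
  by_cases hx : x ∈ s
  · exact Or.inl (Set.piecewise_eq_of_mem _ _ _ hx)
  · right
    have hx' : h x = g' x := Set.piecewise_eq_of_notMem _ _ _ hx
    rw [hx']
    obtain ⟨x', _, rfl⟩ : x ∈ g '' (f '' s)ᶜ := by rwa [hns]
    rw [g'g _]

/-- Given a quasi-isometry `f` between uniformly discrete spaces, with coarse
inverse `g`, and injections `φ`, `ψ` at bounded distance from `f`, `g`
respectively, there is a bijection `h` at bounded distance from `f`; moreover `h`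
is a bilipschitz equivalence. -/
theorem stmt7 {X Y : Type*} [MetricSpace X] [MetricSpace Y]
    (hudX : UniformlyDiscrete X) (hudY : UniformlyDiscrete Y)
    (f : X → Y) (g : Y → X) (hf : CoarseLipschitz f) (hg : CoarseLipschitz g)
    (hgf : ∃ C : ℝ, ∀ x : X, dist (g (f x)) x ≤ C)
    (hfg : ∃ C : ℝ, ∀ y : Y, dist (f (g y)) y ≤ C)
    (φ : X → Y) (hφ : Function.Injective φ) (hφf : ∃ C : ℝ, ∀ x, dist (φ x) (f x) ≤ C)
    (ψ : Y → X) (hψ : Function.Injective ψ) (hψg : ∃ C : ℝ, ∀ y, dist (ψ y) (g y) ≤ C) :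
    ∃ h : X → Y, Function.Bijective h ∧ (∃ C : ℝ, ∀ x, dist (h x) (f x) ≤ C) ∧
      ∃ K : ℝ, 1 ≤ K ∧ ∀ x₁ x₂ : X,
        dist x₁ x₂ ≤ K * dist (h x₁) (h x₂) ∧ dist (h x₁) (h x₂) ≤ K * dist x₁ x₂ := by
  obtain ⟨rX, hrX, hX⟩ := hudX
  obtain ⟨rY, hrY, hY⟩ := hudY
  obtain ⟨Kf, Lf, hKf⟩ := hf
  obtain ⟨Kg, Lg, hKg⟩ := hg
  obtain ⟨Cgf, hCgf⟩ := hgf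
  obtain ⟨Cfg, hCfg⟩ := hfg
  obtain ⟨Cφ, hCφ⟩ := hφf
  obtain ⟨Cψ, hCψ⟩ := hψg
  obtain ⟨h, hbij, hpt⟩ := schroeder_bernstein_strong hφ hψ
  -- bound: dist (h x) (f x) ≤ C
  obtain ⟨C, hC⟩ : ∃ C : ℝ, C = max Cφ (Cfg + (|Kf| * (Cψ + Cgf) + Lf)) := ⟨_, rfl⟩
  have hCbd : ∀ x, dist (h x) (f x) ≤ C := by
    intro x
    rcases hpt x with h1 | h2
    · rw [h1, hC]; exact le_trans (hCφ x) (le_max_left _ _)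
    · -- ψ (h x) = x ; so dist x (g (h x)) ≤ Cψ
      have h3 : dist x (g (h x)) ≤ Cψ := by
        have := hCψ (h x); rwa [h2] at this
      have h4 : dist (f x) (f (g (h x))) ≤ |Kf| * (Cψ + Cgf) + Lf := by
        have hd : dist x (g (h x)) ≤ Cψ + Cgf := le_trans h3 (by
          have : (0:ℝ) ≤ Cgf := le_trans dist_nonneg (hCgf x)
          linarith)
        calc dist (f x) (f (g (h x))) ≤ Kf * dist x (g (h x)) + Lf := hKf _ _
          _ ≤ |Kf| * (Cψ + Cgf) + Lf := by
              nlinarith [dist_nonneg (x := x) (y := g (h x)), le_abs_self Kf, abs_nonneg Kf]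
      have h5 : dist (h x) (f x) ≤ dist (h x) (f (g (h x))) + dist (f (g (h x))) (f x) :=
        dist_triangle _ _ _
      have h6 : dist (h x) (f (g (h x))) ≤ Cfg := by
        rw [dist_comm]; exact hCfg (h x)
      have h7 : dist (f (g (h x))) (f x) ≤ |Kf| * (Cψ + Cgf) + Lf := by
        rw [dist_comm]; exact h4
      calc dist (h x) (f x) ≤ Cfg + (|Kf| * (Cψ + Cgf) + Lf) := by linarith
        _ ≤ C := by rw [hC]; exact le_max_right _ _
  -- handle empty case
  rcases isEmpty_or_nonempty X with hXe | hXne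
  · have hYe : IsEmpty Y := ⟨fun y => (hXe.false (ψ y))⟩
    refine ⟨fun x => isEmptyElim x, ⟨fun a => isEmptyElim a, fun b => isEmptyElim b⟩,
      ⟨0, fun x => isEmptyElim x⟩, 1, le_refl _, fun x₁ => isEmptyElim x₁⟩
  obtain ⟨x₀⟩ := hXne
  have hC0 : (0:ℝ) ≤ C := le_trans dist_nonneg (hCbd x₀)
  have hLf0 : (0:ℝ) ≤ Lf := by have := hKf x₀ x₀; simpa using this
  have hLg0 : (0:ℝ) ≤ Lg := by have := hKg (f x₀) (f x₀); simpa using this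
  obtain ⟨D, hD⟩ : ∃ D : ℝ, D = |Kg| * C + Lg + Cgf := ⟨_, rfl⟩
  have hDbd : ∀ x, dist (g (h x)) x ≤ D := by
    intro x
    have h1 : dist (g (h x)) (g (f x)) ≤ Kg * dist (h x) (f x) + Lg := hKg _ _
    have h2 : dist (g (f x)) x ≤ Cgf := hCgf x
    have h3 : Kg * dist (h x) (f x) ≤ |Kg| * C := by
      have hd0 : (0:ℝ) ≤ dist (h x) (f x) := dist_nonneg
      have hdC : dist (h x) (f x) ≤ C := hCbd x
      nlinarith [le_abs_self Kg, abs_nonneg Kg]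
    calc dist (g (h x)) x ≤ dist (g (h x)) (g (f x)) + dist (g (f x)) x := dist_triangle _ _ _
      _ ≤ D := by rw [hD]; linarith
  have hD0 : (0:ℝ) ≤ D := le_trans dist_nonneg (hDbd x₀)
  obtain ⟨K₁, hK₁⟩ : ∃ K₁ : ℝ, K₁ = |Kg| + (Lg + 2 * D) / rY := ⟨_, rfl⟩
  obtain ⟨K₂, hK₂⟩ : ∃ K₂ : ℝ, K₂ = |Kf| + (Lf + 2 * C) / rX := ⟨_, rfl⟩
  obtain ⟨K, hKdef⟩ : ∃ K : ℝ, K = max 1 (max K₁ K₂) := ⟨_, rfl⟩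
  refine ⟨h, hbij, ⟨C, hCbd⟩, K, by rw [hKdef]; exact le_max_left _ _, fun x₁ x₂ => ?_⟩
  by_cases hx12 : x₁ = x₂
  · subst hx12; simp
  · set d : ℝ := dist x₁ x₂ with hd
    set e : ℝ := dist (h x₁) (h x₂) with he
    have hd0 : 0 ≤ d := hd ▸ dist_nonneg
    have he0 : 0 ≤ e := he ▸ dist_nonneg
    have hdr : rX ≤ d := by
      by_contra hc
      exact hx12 (hX x₁ x₂ (by rw [← hd]; linarith))
    have her : rY ≤ e := by
      by_contra hc
      exact hx12 (hbij.1 (hY (h x₁) (h x₂) (by rw [← he]; linarith)))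
    constructor
    · -- lower bound: d ≤ K * e
      have h1 : d ≤ dist (g (h x₁)) (g (h x₂)) + 2 * D := by
        rw [hd]
        have t1 := hDbd x₁
        have t2 := hDbd x₂
        have t3 : d ≤ dist x₁ (g (h x₁)) + dist (g (h x₁)) (g (h x₂)) + dist (g (h x₂)) x₂ :=
          dist_triangle4 _ _ _ _
        rw [dist_comm x₁] at t3
        linarith
      have h2 : dist (g (h x₁)) (g (h x₂)) ≤ Kg * e + Lg := he ▸ hKg _ _
      have h3 : Kg * e ≤ |Kg| * e := by nlinarith [le_abs_self Kg]
      have h4 : Lg + 2 * D ≤ ((Lg + 2 * D) / rY) * e := by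
        rw [div_mul_eq_mul_div, le_div_iff₀ hrY]
        nlinarith
      have h5 : d ≤ K₁ * e := by
        rw [hK₁, add_mul]
        linarith
      have h6 : K₁ * e ≤ K * e := by
        apply mul_le_mul_of_nonneg_right _ he0
        rw [hKdef]
        exact le_trans (le_max_left _ _) (le_max_right _ _)
      linarith
    · -- upper bound: e ≤ K * d
      have h1 : e ≤ C + dist (f x₁) (f x₂) + C := by
        rw [he]
        have t1 := hCbd x₁
        have t2 := hCbd x₂
        have t3 : e ≤ dist (h x₁) (f x₁) + dist (f x₁) (f x₂) + dist (f x₂) (h x₂) :=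
          dist_triangle4 _ _ _ _
        rw [dist_comm (f x₂)] at t3
        linarith
      have h2 : dist (f x₁) (f x₂) ≤ Kf * d + Lf := hd ▸ hKf _ _
      have h3 : Kf * d ≤ |Kf| * d := by nlinarith [le_abs_self Kf]
      have h4 : Lf + 2 * C ≤ ((Lf + 2 * C) / rX) * d := by
        rw [div_mul_eq_mul_div, le_div_iff₀ hrX]
        nlinarith
      have h5 : e ≤ K₂ * d := by
        rw [hK₂, add_mul]
        linarith
      have h6 : K₂ * d ≤ K * d := by
        apply mul_le_mul_of_nonneg_right _ hd0
        rw [hKdef]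
        exact le_trans (le_max_right _ _) (le_max_right _ _)
      linarith
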